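/- (Logistic comparison bound.) Let R > 0 and let w : [0,∞) → ℝ be a differentiable function with 0 ≤ w(t) ≤ 1 for all t ≥ 0, w(0) ∈ (0,1), and w′(t) ≥ R (1 − w(t)) w(t) for all t ≥ 0. Then for all t ≥ 0, w(t) ≥ 1 − 1 / ( (w(0)/(1 − w(0))) · exp(R t) + 1 ). -/

import Mathlib

open Real

/-- Logistic comparison bound: if `R > 0` and `w : [0,∞) → ℝ` is differentiable with
`0 ≤ w(t) ≤ 1`, `w(0) ∈ (0,1)`, and `w′(t) ≥ R(1 − w(t))w(t)` for all `t ≥ 0`, then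
`w(t) ≥ 1 − 1/((w(0)/(1 − w(0))) exp(Rt) + 1)` for all `t ≥ 0`. -/
theorem logistic_comparison_bound
    (R : ℝ) (hR : 0 < R) (w w' : ℝ → ℝ)
    (hderiv : ∀ t, 0 ≤ t → HasDerivAt w (w' t) t)
    (hbounds : ∀ t, 0 ≤ t → 0 ≤ w t ∧ w t ≤ 1)
    (h0 : 0 < w 0) (h1 : w 0 < 1)
    (hdrift : ∀ t, 0 ≤ t → R * (1 - w t) * w t ≤ w' t) :
    ∀ t, 0 ≤ t → 1 - 1 / ((w 0 / (1 - w 0)) * Real.exp (R * t) + 1) ≤ w t := by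
  set c : ℝ := w 0 / (1 - w 0) with hc_def
  have h1w : (0:ℝ) < 1 - w 0 := by linarith
  have hc : 0 < c := div_pos h0 h1w
  -- the comparison function
  set ψ : ℝ → ℝ := fun t => ((1 - w t) * (c * Real.exp (R * t) + 1) - 1) * Real.exp (-(R * t))
    with hψ_def
  set ψd : ℝ → ℝ := fun t =>
    Real.exp (-(R * t)) * ((-(w' t)) * (c * Real.exp (R * t) + 1)
      + (1 - w t) * (c * (R * Real.exp (R * t)))
      - R * ((1 - w t) * (c * Real.exp (R * t) + 1) - 1)) with hψd_def
  have hE : ∀ t : ℝ, HasDerivAt (fun t => Real.exp (R * t)) (R * Real.exp (R * t)) t := by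
    intro t
    have := ((hasDerivAt_id t).const_mul R).exp
    simpa [mul_comm] using this
  have hψderiv : ∀ t, 0 ≤ t → HasDerivAt ψ (ψd t) t := by
    intro t ht
    have h1 : HasDerivAt (fun t => (1 - w t) * (c * Real.exp (R * t) + 1) - 1)
        ((-(w' t)) * (c * Real.exp (R * t) + 1)
          + (1 - w t) * (c * (R * Real.exp (R * t)))) t := by
      have := (((hderiv t ht).const_sub 1).mul (((hE t).const_mul c).add_const 1)).sub_const 1
      simpa [mul_comm, mul_left_comm, mul_assoc] using this
    have h2 : HasDerivAt (fun t : ℝ => Real.exp (-(R * t))) (-R * Real.exp (-(R * t))) t := by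
      have := (((hasDerivAt_id t).const_mul R).neg).exp
      simpa [mul_comm] using this
    have : HasDerivAt (fun t => ((1 - w t) * (c * Real.exp (R * t) + 1) - 1) * Real.exp (-(R * t))) _ t :=
      h1.fun_mul h2
    convert this using 1
    ring
  -- ψ 0 = 0
  have hψ0 : ψ 0 = 0 := by
    have hc1 : c + 1 = 1 / (1 - w 0) := by
      field_simp [hc_def]
      rw [hc_def, add_mul, div_mul_cancel₀ _ h1w.ne']; ring
    simp only [hψ_def, mul_zero, Real.exp_zero, neg_zero, mul_one]
    rw [hc1]
    field_simp
    norm_num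
  -- key: if ψ t > 0 and t ≥ 0 then ψd t ≤ 0
  have hkey : ∀ t, 0 ≤ t → 0 < ψ t → ψd t ≤ 0 := by
    intro t ht hψt
    have hEpos : 0 < Real.exp (R * t) := Real.exp_pos _
    have hEneg : 0 < Real.exp (-(R * t)) := Real.exp_pos _
    have hD : 0 < c * Real.exp (R * t) + 1 := by positivity
    have hG : 0 < (1 - w t) * (c * Real.exp (R * t) + 1) - 1 := by
      by_contra h
      push_neg at h
      have : ψ t ≤ 0 := mul_nonpos_of_nonpos_of_nonneg (by linarith) hEneg.le
      linarith
    have hwb := hbounds t ht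
    have hdr := hdrift t ht
    have hdr' : R * (1 - w t) * w t * (c * Real.exp (R * t) + 1)
        ≤ w' t * (c * Real.exp (R * t) + 1) :=
      mul_le_mul_of_nonneg_right hdr hD.le
    have hbr : (-(w' t)) * (c * Real.exp (R * t) + 1)
        + (1 - w t) * (c * (R * Real.exp (R * t)))
        - R * ((1 - w t) * (c * Real.exp (R * t) + 1) - 1) ≤ 0 := by
      nlinarith [mul_nonneg hwb.1 hG.le, mul_nonneg (mul_nonneg hR.le hwb.1) hG.le]
    exact mul_nonpos_of_nonneg_of_nonpos hEneg.le hbr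
  -- ψ ≤ 0 on [0,∞)
  have hψle : ∀ t, 0 ≤ t → ψ t ≤ 0 := by
    intro t0 ht0
    by_contra hpos
    push_neg at hpos
    set S : Set ℝ := Set.Icc 0 t0 ∩ ψ ⁻¹' Set.Iic 0 with hS_def
    have hψcont : ContinuousOn ψ (Set.Icc 0 t0) := fun t ht =>
      ((hψderiv t ht.1).continuousAt).continuousWithinAt
    have hSclosed : IsClosed S :=
      hψcont.preimage_isClosed_of_isClosed isClosed_Icc isClosed_Iic
    have h0S : (0:ℝ) ∈ S := by
      constructor
      · exact ⟨le_refl 0, ht0⟩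
      · simp [hψ0]
    have hSne : S.Nonempty := ⟨0, h0S⟩
    have hSbdd : BddAbove S := ⟨t0, fun x hx => hx.1.2⟩
    set s := sSup S with hs_def
    have hsS : s ∈ S := hSclosed.csSup_mem hSne hSbdd
    have hs0 : 0 ≤ s := hsS.1.1
    have hst0 : s ≤ t0 := hsS.1.2
    have hψs : ψ s ≤ 0 := hsS.2
    have hslt : s < t0 := by
      rcases lt_or_eq_of_le hst0 with h | h
      · exact h
      · exfalso; rw [h] at hψs; linarith
    -- on (s, t0], ψ > 0
    have hgt : ∀ t, t ∈ Set.Ioo s t0 → 0 < ψ t := by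
      intro t htm
      by_contra h
      push_neg at h
      have : t ∈ S := ⟨⟨le_trans hs0 htm.1.le, htm.2.le⟩, h⟩
      have := le_csSup hSbdd this
      linarith [htm.1]
    have hanti : AntitoneOn ψ (Set.Icc s t0) := by
      apply antitoneOn_of_deriv_nonpos (convex_Icc s t0)
      · exact hψcont.mono (Set.Icc_subset_Icc_left hs0)
      · intro t htm
        rw [interior_Icc] at htm
        exact (hψderiv t (le_trans hs0 htm.1.le)).differentiableAt.differentiableWithinAt
      · intro t htm
        rw [interior_Icc] at htm
        rw [(hψderiv t (le_trans hs0 htm.1.le)).deriv]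
        exact hkey t (le_trans hs0 htm.1.le) (hgt t htm)
    have := hanti (Set.left_mem_Icc.mpr hst0) (Set.right_mem_Icc.mpr hst0) hst0
    linarith
  -- conclude
  intro t ht
  have hψt := hψle t ht
  have hEneg : 0 < Real.exp (-(R * t)) := Real.exp_pos _
  have hD : 0 < c * Real.exp (R * t) + 1 := by positivity
  have hle : (1 - w t) * (c * Real.exp (R * t) + 1) - 1 ≤ 0 := by
    by_contra h
    push_neg at h
    have : 0 < ψ t := mul_pos h hEneg
    linarith
  have : 1 - w t ≤ 1 / (c * Real.exp (R * t) + 1) := by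
    rw [le_div_iff₀ hD]
    linarith
  linarith
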